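/- Let K be a convex body in S^d ⊆ ℝ^{d+1}, let H be a (d−1)-dimensional great sphere of S^d with H ∩ K = ∅, and let h ∈ S^d be such that H is the boundary of the open hemisphere H_h and K ⊆ H_h. Then a finite point set {p_1, …, p_n} ⊆ H illuminates K if and only if the open hemispheres H_{p_1}, …, H_{p_n} — whose boundary great spheres all contain the point −h, which lies in the interior of K* — have the property that every proper exposed face of K* is contained in at least one of them. -/

import Mathlib

open RealInnerProductSpace Metric Set

noncomputable section

/-- Euclidean `n`-space. -/
abbrev Euc (n : ℕ) := EuclideanSpace ℝ (Fin n)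

/-- The unit sphere `S^d` in `ℝ^{d+1}`. -/
def uSphere (d : ℕ) : Set (Euc (d + 1)) := Metric.sphere 0 1

/-- Radial (normalizing) projection onto the unit sphere. -/
def nproj {n : ℕ} (x : Euc n) : Euc n := ‖x‖⁻¹ • x

/-- The spherical segment (shorter great-circle arc) with endpoints `p` and `q`
(meaningful when `p ≠ -q`). -/
def sphSeg {n : ℕ} (p q : Euc n) : Set (Euc n) :=
  (fun t : ℝ => nproj ((1 - t) • p + t • q)) '' Set.Icc 0 1

/-- The relative interior of the spherical segment with endpoints `p` and `q`. -/
def sphOpenSeg {n : ℕ} (p q : Euc n) : Set (Euc n) :=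
  (fun t : ℝ => nproj ((1 - t) • p + t • q)) '' Set.Ioo 0 1

/-- The great circle through `p` and `q`. -/
def greatCircle (d : ℕ) (p q : Euc (d + 1)) : Set (Euc (d + 1)) :=
  {z ∈ uSphere d | z ∈ Submodule.span ℝ {p, q}}

/-- The open hemisphere with center `x`. -/
def openHemi (d : ℕ) (x : Euc (d + 1)) : Set (Euc (d + 1)) :=
  {y ∈ uSphere d | 0 < ⟪x, y⟫}

/-- The `(d-1)`-dimensional great sphere of `S^d` with pole `u`. -/
def greatSphere (d : ℕ) (u : Euc (d + 1)) : Set (Euc (d + 1)) :=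
  {y ∈ uSphere d | ⟪u, y⟫ = 0}

/-- A set `C ⊆ S^d` is spherically convex if it is contained in an open hemisphere
and contains the shorter arc connecting any two of its points. -/
def SphConvex (d : ℕ) (C : Set (Euc (d + 1))) : Prop :=
  C ⊆ uSphere d ∧ (∃ x ∈ uSphere d, C ⊆ openHemi d x) ∧
    ∀ p ∈ C, ∀ q ∈ C, sphSeg p q ⊆ C

/-- The interior of `K` relative to the sphere `S^d`. -/
def sphInt (d : ℕ) (K : Set (Euc (d + 1))) : Set (Euc (d + 1)) :=
  {x ∈ uSphere d | ∃ U : Set (Euc (d + 1)), IsOpen U ∧ x ∈ U ∧ U ∩ uSphere d ⊆ K}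

/-- The boundary of a closed set `K ⊆ S^d` relative to the sphere `S^d`. -/
def sphBd (d : ℕ) (K : Set (Euc (d + 1))) : Set (Euc (d + 1)) := K \ sphInt d K

/-- A convex body in `S^d`: a compact spherically convex set with nonempty interior
relative to `S^d`. -/
def IsSphBody (d : ℕ) (K : Set (Euc (d + 1))) : Prop :=
  IsCompact K ∧ SphConvex d K ∧ (sphInt d K).Nonempty

/-- The boundary point `q` of `K` is illuminated from the point `p`. -/
def SphIlluminated (d : ℕ) (K : Set (Euc (d + 1))) (p q : Euc (d + 1)) : Prop :=
  q ≠ -p ∧ sphSeg p q ∩ sphInt d K = ∅ ∧ (greatCircle d p q ∩ sphInt d K).Nonempty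

/-- The set `S` illuminates the convex body `K ⊆ S^d`. -/
def SphIlluminates (d : ℕ) (K S : Set (Euc (d + 1))) : Prop :=
  ∀ q ∈ sphBd d K, ∃ p ∈ S, SphIlluminated d K p q

/-- The illumination number of a convex body `K` in `S^d`: the smallest cardinality of
a set illuminating `K` and lying on a `(d-1)`-dimensional great sphere disjoint from `K`. -/
def sphIllumNumber (d : ℕ) (K : Set (Euc (d + 1))) : ℕ∞ :=
  sInf {n : ℕ∞ | ∃ u ∈ uSphere d, greatSphere d u ∩ K = ∅ ∧
    ∃ S : Finset (Euc (d + 1)), ↑S ⊆ greatSphere d u ∧ SphIlluminates d K ↑S ∧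
      (S.card : ℕ∞) = n}

/-- A convex body in a Euclidean space: compact, convex, with nonempty interior. -/
def IsConvexBody {n : ℕ} (K : Set (Euc n)) : Prop :=
  IsCompact K ∧ Convex ℝ K ∧ (interior K).Nonempty

/-- The boundary point `p` of `K` is illuminated from the direction `v`. -/
def IlluminatedDir {n : ℕ} (K : Set (Euc n)) (v p : Euc n) : Prop :=
  ∃ t : ℝ, 0 < t ∧ p + t • v ∈ interior K

/-- The finite set of unit vectors `D` illuminates the convex body `K`. -/
def IlluminatesDirs {n : ℕ} (D : Finset (Euc n)) (K : Set (Euc n)) : Prop :=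
  (∀ v ∈ D, ‖v‖ = 1) ∧ ∀ p ∈ frontier K, ∃ v ∈ D, IlluminatedDir K v p

/-- The illumination number of a convex body in Euclidean space. -/
def illumNumber {n : ℕ} (K : Set (Euc n)) : ℕ∞ :=
  sInf {m : ℕ∞ | ∃ D : Finset (Euc n), IlluminatesDirs D K ∧ (D.card : ℕ∞) = m}

/-- The illumination number of a convex body `K` of an affine subspace of a Euclidean
space, computed within the affine span of `K` (directions are parallel to the affine
span; interior and boundary are relative to the affine span). -/
def intIllumNumber {n : ℕ} (K : Set (Euc n)) : ℕ∞ :=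
  sInf {m : ℕ∞ | ∃ D : Finset (Euc n),
    (∀ v ∈ D, ‖v‖ = 1 ∧ v ∈ (affineSpan ℝ K).direction) ∧
    (∀ p ∈ intrinsicFrontier ℝ K, ∃ v ∈ D, ∃ t : ℝ, 0 < t ∧
      p + t • v ∈ intrinsicInterior ℝ K) ∧
    (D.card : ℕ∞) = m}

/-- A face of a convex body `K` in Euclidean space: a convex subset `F ⊆ K` such that
any segment of `K` whose relative interior meets `F` is contained in `F`. -/
def IsFace {n : ℕ} (K F : Set (Euc n)) : Prop :=
  F ⊆ K ∧ Convex ℝ F ∧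
    ∀ x ∈ K, ∀ y ∈ K, (openSegment ℝ x y ∩ F).Nonempty → segment ℝ x y ⊆ F

/-- The dimension of a subset of a Euclidean space (dimension of its affine hull). -/
def faceDim {n : ℕ} (F : Set (Euc n)) : ℕ := Module.finrank ℝ (vectorSpan ℝ F)

/-- A face of a convex body `K` in `S^d`: a spherically convex subset `F ⊆ K` such that
any spherical segment of `K` whose relative interior meets `F` is contained in `F`. -/
def IsSphFace (d : ℕ) (K F : Set (Euc (d + 1))) : Prop :=
  F ⊆ K ∧ SphConvex d F ∧
    ∀ p ∈ K, ∀ q ∈ K, (sphOpenSeg p q ∩ F).Nonempty → sphSeg p q ⊆ F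

/-- The (spherical) dimension of a subset `F` of `S^d`: one less than the dimension of
its linear hull. -/
def sphFaceDim (d : ℕ) (F : Set (Euc (d + 1))) : ℕ :=
  Module.finrank ℝ (Submodule.span ℝ F) - 1

/-- The polar body of a convex body `K ⊆ S^d`. -/
def sphPolar (d : ℕ) (K : Set (Euc (d + 1))) : Set (Euc (d + 1)) :=
  {x ∈ uSphere d | ∀ y ∈ K, ⟪x, y⟫ ≤ 0}

/-- An exposed face of a convex body `L` in `S^d`: a nonempty intersection of `L`
with a supporting great sphere. -/
def IsSphExposedFace (d : ℕ) (L F : Set (Euc (d + 1))) : Prop :=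
  F.Nonempty ∧ ∃ u ∈ uSphere d, (∀ y ∈ L, ⟪u, y⟫ ≤ 0) ∧ F = {y ∈ L | ⟪u, y⟫ = 0}

/-- The conjugate face of an exposed face `F` of a convex body `K ⊆ S^d`. -/
def conjFace (d : ℕ) (K F : Set (Euc (d + 1))) : Set (Euc (d + 1)) :=
  {x ∈ sphPolar d K | ∀ y ∈ F, ⟪x, y⟫ = 0}

/-- Two Euclidean convex bodies are combinatorially equivalent if there is a
homeomorphism between their boundaries mapping faces to faces. -/
def CombEquiv {n : ℕ} (K K' : Set (Euc n)) : Prop :=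
  ∃ h : (frontier K) ≃ₜ (frontier K'),
    ∀ X : Set (frontier K),
      IsFace K (Subtype.val '' X) ↔ IsFace K' (Subtype.val '' (h '' X))

/-- The combinatorial illumination number of a Euclidean convex body `K`: the smallest
number of directions that illuminate some convex body combinatorially equivalent to `K`. -/
def combIllumNumber {n : ℕ} (K : Set (Euc n)) : ℕ∞ :=
  sInf {m : ℕ∞ | ∃ K' : Set (Euc n), IsConvexBody K' ∧ CombEquiv K K' ∧
    ∃ D : Finset (Euc n), IlluminatesDirs D K' ∧ (D.card : ℕ∞) = m}

/-- A convex polytope in `S^d`: a convex body that is the intersection of finitely many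
closed hemispheres. -/
def IsSphPolytope (d : ℕ) (P : Set (Euc (d + 1))) : Prop :=
  IsSphBody d P ∧ ∃ s : Finset (Euc (d + 1)), (∀ u ∈ s, u ∈ uSphere d) ∧
    P = uSphere d ∩ {y | ∀ u ∈ s, ⟪u, y⟫ ≤ 0}

end

section IllumAux

open Metric Set Pointwise

lemma mem_uSphere {d : ℕ} {x : Euc (d+1)} : x ∈ uSphere d ↔ ‖x‖ = 1 := by
  simp [uSphere, mem_sphere_zero_iff_norm]

lemma nproj_norm {m : ℕ} {z : Euc m} (hz : z ≠ 0) : ‖nproj z‖ = 1 := by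
  have h0 : ‖z‖ ≠ 0 := norm_ne_zero_iff.mpr hz
  rw [nproj, norm_smul, norm_inv, norm_norm, inv_mul_cancel₀ h0]

lemma smul_nproj {m : ℕ} (z : Euc m) : ‖z‖ • nproj z = z := by
  by_cases hz : z = 0
  · simp [hz, nproj]
  · rw [nproj, smul_smul, mul_inv_cancel₀ (norm_ne_zero_iff.mpr hz), one_smul]

lemma nproj_eq_self {m : ℕ} {z : Euc m} (hz : ‖z‖ = 1) : nproj z = z := by
  rw [nproj, hz]; simp

lemma nproj_smul {m : ℕ} {c : ℝ} (hc : 0 < c) (z : Euc m) : nproj (c • z) = nproj z := by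
  by_cases hz : z = 0
  · simp [hz, nproj]
  · have h1 : ‖c • z‖⁻¹ * c = ‖z‖⁻¹ := by
      rw [norm_smul, Real.norm_eq_abs, abs_of_pos hc, mul_inv, mul_right_comm,
        inv_mul_cancel₀ hc.ne', one_mul]
    rw [nproj, nproj, smul_smul, h1]

lemma continuousAt_nproj {m : ℕ} {z : Euc m} (hz : z ≠ 0) : ContinuousAt nproj z := by
  have : ContinuousAt (fun w : Euc m => ‖w‖⁻¹ • w) z :=
    ((continuous_norm.continuousAt).inv₀ (norm_ne_zero_iff.mpr hz)).smul continuousAt_id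
  exact this

lemma isOpen_nproj_pre {m : ℕ} {U : Set (Euc m)} (hU : IsOpen U) :
    IsOpen {z : Euc m | z ≠ 0 ∧ nproj z ∈ U} := by
  rw [isOpen_iff_mem_nhds]
  rintro z ⟨hz0, hzU⟩
  have h1 : {w : Euc m | w ≠ 0} ∈ nhds z := isOpen_ne.mem_nhds hz0
  have h2 : nproj ⁻¹' U ∈ nhds z :=
    (continuousAt_nproj hz0).preimage_mem_nhds (hU.mem_nhds hzU)
  exact Filter.mem_of_superset (Filter.inter_mem h1 h2) (fun w hw => ⟨hw.1, hw.2⟩)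

/-- The cone (from the origin) over a subset of the sphere. -/
def icone {d : ℕ} (K : Set (Euc (d+1))) : Set (Euc (d+1)) :=
  insert 0 {z | nproj z ∈ K}

variable {d : ℕ} {K : Set (Euc (d+1))} {h : Euc (d+1)}

lemma mem_icone {z : Euc (d+1)} : z ∈ icone K ↔ z = 0 ∨ nproj z ∈ K := mem_insert_iff

lemma zero_mem_icone : (0 : Euc (d+1)) ∈ icone K := mem_insert _ _

lemma mem_icone_of_mem (hKs : K ⊆ uSphere d) {y : Euc (d+1)} (hy : y ∈ K) : y ∈ icone K :=
  mem_icone.mpr (Or.inr (by rw [nproj_eq_self (mem_uSphere.mp (hKs hy))]; exact hy))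

lemma ne_zero_of_nproj_mem (hKs : K ⊆ uSphere d) {x : Euc (d+1)} (hx : nproj x ∈ K) :
    x ≠ 0 := by
  intro h0
  have := mem_uSphere.mp (hKs hx)
  rw [h0] at this
  simp [nproj] at this

lemma icone_inter_sphere (hKs : K ⊆ uSphere d) {z : Euc (d+1)} (hz : z ∈ uSphere d) :
    z ∈ icone K ↔ z ∈ K := by
  constructor
  · intro hm
    rcases mem_icone.mp hm with h0 | h1
    · rw [mem_uSphere, h0, norm_zero] at hz; norm_num at hz
    · rwa [nproj_eq_self (mem_uSphere.mp hz)] at h1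
  · exact mem_icone_of_mem hKs

lemma smul_mem_icone {c : ℝ} (hc : 0 ≤ c) {z : Euc (d+1)} (hz : z ∈ icone K) :
    c • z ∈ icone K := by
  rcases hc.eq_or_lt with rfl | hc'
  · simpa using zero_mem_icone
  · rcases mem_icone.mp hz with rfl | h1
    · simpa using zero_mem_icone
    · exact mem_icone.mpr (Or.inr (by rwa [nproj_smul hc']))

lemma inner_nonpos_icone (hKs : K ⊆ uSphere d) {x : Euc (d+1)}
    (hx : ∀ y ∈ K, ⟪x, y⟫ ≤ 0) : ∀ z ∈ icone K, ⟪x, z⟫ ≤ 0 := by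
  intro z hz
  rcases mem_icone.mp hz with rfl | h1
  · simp
  · have h2 := hx _ h1
    calc ⟪x, z⟫ = ⟪x, ‖z‖ • nproj z⟫ := by rw [smul_nproj]
    _ = ‖z‖ * ⟪x, nproj z⟫ := real_inner_smul_right _ _ _
    _ ≤ 0 := mul_nonpos_of_nonneg_of_nonpos (norm_nonneg z) h2

lemma inner_pos_icone (hKs : K ⊆ uSphere d) (hKpos : ∀ y ∈ K, 0 < ⟪h, y⟫)
    {z : Euc (d+1)} (hz : z ∈ icone K) (h0 : z ≠ 0) : 0 < ⟪h, z⟫ := by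
  rcases mem_icone.mp hz with rfl | h1
  · exact absurd rfl h0
  · calc (0:ℝ) < ‖z‖ * ⟪h, nproj z⟫ :=
        mul_pos (norm_pos_iff.mpr h0) (hKpos _ h1)
    _ = ⟪h, ‖z‖ • nproj z⟫ := (real_inner_smul_right _ _ _).symm
    _ = ⟪h, z⟫ := by rw [smul_nproj]

lemma isClosed_icone (hKs : K ⊆ uSphere d) (hKcl : IsClosed K) : IsClosed (icone K) := by
  rw [← isOpen_compl_iff]
  have he : (icone K)ᶜ = {z | z ≠ 0 ∧ nproj z ∈ Kᶜ} := by
    ext z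
    simp only [mem_compl_iff, mem_icone, not_or, mem_setOf_eq]
  rw [he]
  exact isOpen_nproj_pre hKcl.isOpen_compl

lemma convex_icone (hKs : K ⊆ uSphere d)
    (hconv : ∀ p ∈ K, ∀ q ∈ K, sphSeg p q ⊆ K) : Convex ℝ (icone K) := by
  intro x hx y hy a b ha hb hab
  rcases mem_icone.mp hx with rfl | hx'
  · simpa using smul_mem_icone hb hy
  rcases mem_icone.mp hy with rfl | hy'
  · simpa using smul_mem_icone ha hx
  rcases ha.eq_or_lt with rfl | ha'
  · simpa using smul_mem_icone hb hy
  rcases hb.eq_or_lt with rfl | hb'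
  · simpa using smul_mem_icone ha hx
  have hx0 : x ≠ 0 := ne_zero_of_nproj_mem hKs hx'
  have hy0 : y ≠ 0 := ne_zero_of_nproj_mem hKs hy'
  set s := a * ‖x‖ with hs
  set t := b * ‖y‖ with ht
  have hs' : 0 < s := mul_pos ha' (norm_pos_iff.mpr hx0)
  have ht' : 0 < t := mul_pos hb' (norm_pos_iff.mpr hy0)
  have hc : 0 < s + t := add_pos hs' ht'
  set μ := t / (s + t) with hμ
  have hμ0 : 0 ≤ μ := le_of_lt (div_pos ht' hc)
  have hμ1 : μ ≤ 1 := by rw [hμ, div_le_one hc]; linarith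
  have key : (s + t) • ((1 - μ) • nproj x + μ • nproj y) = a • x + b • y := by
    have e1 : (1 : ℝ) - μ = s / (s + t) := by
      rw [hμ]; field_simp; ring
    rw [e1, hμ, smul_add, smul_smul, smul_smul,
      mul_div_cancel₀ _ hc.ne', mul_div_cancel₀ _ hc.ne', hs, ht,
      mul_smul, mul_smul, smul_nproj, smul_nproj]
  refine mem_icone.mpr (Or.inr ?_)
  rw [← key, nproj_smul hc]
  exact hconv _ hx' _ hy' ⟨μ, ⟨hμ0, hμ1⟩, rfl⟩

lemma sphInt_subset' : sphInt d K ⊆ K := by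
  rintro x ⟨hxS, U, hUo, hxU, hsub⟩
  exact hsub ⟨hxU, hxS⟩

lemma sphInt_eq_inter (hKs : K ⊆ uSphere d) :
    sphInt d K = uSphere d ∩ interior (icone K) := by
  ext q
  constructor
  · rintro ⟨hqS, U, hUo, hqU, hUK⟩
    refine ⟨hqS, ?_⟩
    have hq0 : q ≠ 0 := by
      intro h0
      rw [mem_uSphere, h0, norm_zero] at hqS; norm_num at hqS
    refine mem_interior.mpr ⟨{z | z ≠ 0 ∧ nproj z ∈ U}, ?_, isOpen_nproj_pre hUo,
      ⟨hq0, by rwa [nproj_eq_self (mem_uSphere.mp hqS)]⟩⟩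
    rintro z ⟨hz0, hzU⟩
    exact mem_icone.mpr (Or.inr (hUK ⟨hzU, mem_uSphere.mpr (nproj_norm hz0)⟩))
  · rintro ⟨hqS, hqI⟩
    exact ⟨hqS, interior (icone K), isOpen_interior, hqI,
      fun z hz => (icone_inter_sphere hKs hz.2).mp (interior_subset hz.1)⟩

lemma smul_mem_interior_icone {c : ℝ} (hc : 0 < c) {z : Euc (d+1)}
    (hz : z ∈ interior (icone K)) : c • z ∈ interior (icone K) := by
  obtain ⟨V, hVsub, hVo, hzV⟩ := mem_interior.mp hz
  refine mem_interior.mpr ⟨c • V, ?_, hVo.smul₀ hc.ne', smul_mem_smul_set hzV⟩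
  rintro w ⟨v, hv, rfl⟩
  exact smul_mem_icone hc.le (hVsub hv)

lemma inner_neg_interior_icone {x z : Euc (d+1)} (hx0 : x ≠ 0)
    (hxC : ∀ w ∈ icone K, ⟪x, w⟫ ≤ 0) (hz : z ∈ interior (icone K)) : ⟪x, z⟫ < 0 := by
  rcases (hxC z (interior_subset hz)).lt_or_eq with hlt | heq
  · exact hlt
  · exfalso
    obtain ⟨ε, hε, hball⟩ := Metric.isOpen_iff.mp isOpen_interior z hz
    have hxn : 0 < ‖x‖ := norm_pos_iff.mpr hx0
    set δ := ε / (2 * ‖x‖) with hδdef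
    have hδ : 0 < δ := by positivity
    have hmem : z + δ • x ∈ icone K := by
      apply interior_subset
      apply hball
      rw [mem_ball, dist_eq_norm, add_sub_cancel_left, norm_smul, Real.norm_eq_abs,
        abs_of_pos hδ, hδdef]
      rw [div_mul_eq_mul_div, div_lt_iff₀ (by positivity)]
      nlinarith
    have h2 := hxC _ hmem
    rw [inner_add_right, real_inner_smul_right, heq, zero_add] at h2
    have hxx : 0 < ⟪x, x⟫ := by
      rw [real_inner_self_eq_norm_sq]
      exact pow_pos (norm_pos_iff.mpr hx0) 2
    nlinarith

lemma zero_not_mem_interior_icone (hKs : K ⊆ uSphere d)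
    (hKpos : ∀ y ∈ K, 0 < ⟪h, y⟫) (hh : h ∈ uSphere d) :
    (0 : Euc (d+1)) ∉ interior (icone K) := by
  intro h0
  obtain ⟨ε, hε, hball⟩ := Metric.isOpen_iff.mp isOpen_interior 0 h0
  have hhn : ‖h‖ = 1 := mem_uSphere.mp hh
  set z : Euc (d+1) := (-(ε/2)) • h with hz
  have hzmem : z ∈ icone K := by
    apply interior_subset
    apply hball
    rw [mem_ball, dist_eq_norm, sub_zero, hz, norm_smul, Real.norm_eq_abs, hhn]
    rw [abs_neg, abs_of_pos (by linarith)]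
    linarith
  have hz0 : z ≠ 0 := by
    rw [hz]
    intro hcon
    have := congrArg (‖·‖) hcon
    simp only [norm_smul, Real.norm_eq_abs, hhn, norm_zero, mul_one, abs_neg] at this
    rw [abs_of_pos (by linarith : (0:ℝ) < ε/2)] at this
    linarith
  have := inner_pos_icone hKs hKpos hzmem hz0
  rw [hz, real_inner_smul_right, real_inner_self_eq_norm_sq, hhn] at this
  nlinarith

lemma cone_nonpos (f : Euc (d+1) →L[ℝ] ℝ) {b : ℝ}
    (hfb : ∀ z ∈ icone K, f z ≤ b) : ∀ z ∈ icone K, f z ≤ 0 := by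
  have hb0 : 0 ≤ b := by
    have := hfb 0 zero_mem_icone
    simpa using this
  intro z hz
  by_contra hgt
  push_neg at hgt
  have h2 : ((b + 1) / f z) • z ∈ icone K := smul_mem_icone (by positivity) hz
  have h3 := hfb _ h2
  rw [map_smul, smul_eq_mul, div_mul_cancel₀ _ hgt.ne'] at h3
  linarith

lemma exists_unit_repr (f : Euc (d+1) →L[ℝ] ℝ) (hf : f ≠ 0) :
    ∃ (x : Euc (d+1)) (c : ℝ), ‖x‖ = 1 ∧ 0 < c ∧ ∀ w, ⟪x, w⟫ = c * f w := by
  set v := (InnerProductSpace.toDual ℝ (Euc (d+1))).symm f with hvdef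
  have hv : ∀ w, ⟪v, w⟫ = f w := fun w => InnerProductSpace.toDual_symm_apply
  have hv0 : v ≠ 0 := by
    intro h0
    apply hf
    ext w
    have := hv w
    rw [h0] at this
    simpa using this.symm
  refine ⟨nproj v, ‖v‖⁻¹, nproj_norm hv0, inv_pos.mpr (norm_pos_iff.mpr hv0), fun w => ?_⟩
  show ⟪‖v‖⁻¹ • v, w⟫ = ‖v‖⁻¹ * f w
  rw [real_inner_smul_left, hv]

lemma sep_icone (hKs : K ⊆ uSphere d) (hCconv : Convex ℝ (icone K))
    (hint : (interior (icone K)).Nonempty)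
    {S : Set (Euc (d+1))} (hS : Convex ℝ S) {q : Euc (d+1)}
    (hqC : q ∈ icone K) (hqS : q ∈ S)
    (hdis : interior (icone K) ∩ S = ∅) :
    ∃ x : Euc (d+1), ‖x‖ = 1 ∧ (∀ z ∈ icone K, ⟪x, z⟫ ≤ 0) ∧ ⟪x, q⟫ = 0 ∧
      ∀ w ∈ S, 0 ≤ ⟪x, w⟫ := by
  obtain ⟨f, u, hfu, hfS⟩ := geometric_hahn_banach_open hCconv.interior isOpen_interior hS
    (disjoint_iff_inter_eq_empty.mpr hdis)
  obtain ⟨a0, ha0⟩ := hint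
  have hfC : ∀ z ∈ icone K, f z ≤ u := by
    intro z hz
    by_contra hgt
    push_neg at hgt
    have hfa : f a0 < u := hfu _ ha0
    have hd : 0 < f z - f a0 := by linarith
    set ε := (f z - u) / (f z - f a0) with hεdef
    have hε0 : 0 < ε := div_pos (by linarith) hd
    have hε1 : ε ≤ 1 := by rw [hεdef, div_le_one hd]; linarith
    have hmem : ε • a0 + (1 - ε) • z ∈ interior (icone K) :=
      hCconv.combo_interior_self_mem_interior ha0 hz hε0 (by linarith) (by ring)
    have h4 := hfu _ hmem
    rw [map_add, map_smul, map_smul, smul_eq_mul, smul_eq_mul] at h4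
    have hεd : ε * (f z - f a0) = f z - u := by
      rw [hεdef, div_mul_cancel₀ _ hd.ne']
    nlinarith
  have hu0 : 0 ≤ u := by
    have := hfC 0 zero_mem_icone
    simpa using this
  have hfC0 : ∀ z ∈ icone K, f z ≤ 0 := cone_nonpos f hfC
  have hfq0 : f q = 0 := le_antisymm (hfC0 q hqC) (le_trans hu0 (hfS q hqS))
  have hu' : u = 0 := le_antisymm (by linarith [hfS q hqS, hfC0 q hqC]) hu0
  have hf0 : f ≠ 0 := by
    intro h0
    have := hfu a0 ha0
    rw [h0] at this
    simp only [ContinuousLinearMap.zero_apply] at this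
    rw [hu'] at this
    exact lt_irrefl 0 this
  obtain ⟨x, c, hxn, hc, hxf⟩ := exists_unit_repr f hf0
  refine ⟨x, hxn, fun z hz => ?_, ?_, fun w hw => ?_⟩
  · rw [hxf]
    exact mul_nonpos_of_nonneg_of_nonpos hc.le (hfC0 z hz)
  · rw [hxf, hfq0, mul_zero]
  · rw [hxf]
    have := hfS w hw
    rw [hu'] at this
    positivity

lemma exists_normal_icone (hKs : K ⊆ uSphere d) (hCconv : Convex ℝ (icone K))
    (hint : (interior (icone K)).Nonempty)
    {q : Euc (d+1)} (hqK : q ∈ K) (hq' : q ∉ sphInt d K) :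
    ∃ x : Euc (d+1), ‖x‖ = 1 ∧ (∀ z ∈ icone K, ⟪x, z⟫ ≤ 0) ∧ ⟪x, q⟫ = 0 := by
  have hqint : q ∉ interior (icone K) := by
    intro hcon
    exact hq' ((sphInt_eq_inter hKs).symm ▸ (⟨hKs hqK, hcon⟩ :
      q ∈ uSphere d ∩ interior (icone K)))
  have hdis : interior (icone K) ∩ {q} = ∅ := by
    rw [eq_empty_iff_forall_notMem]
    rintro w ⟨hw1, rfl⟩
    exact hqint hw1
  obtain ⟨x, hxn, hxC, hxq, _⟩ := sep_icone hKs hCconv hint (convex_singleton q)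
    (mem_icone_of_mem hKs hqK) rfl hdis
  exact ⟨x, hxn, hxC, hxq⟩

lemma illum_iff (hK : IsSphBody d K) (hh : h ∈ uSphere d)
    (hKh : K ⊆ openHemi d h) {q : Euc (d+1)} (hqK : q ∈ K) (hq' : q ∉ sphInt d K)
    {pp : Euc (d+1)} (hpS : pp ∈ uSphere d) (hph : ⟪h, pp⟫ = 0) :
    SphIlluminated d K pp q ↔
      ∀ x : Euc (d+1), ‖x‖ = 1 → (∀ y ∈ K, ⟪x, y⟫ ≤ 0) → ⟪x, q⟫ = 0 → 0 < ⟪pp, x⟫ := by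
  have hKs : K ⊆ uSphere d := hK.2.1.1
  have hseg : ∀ p ∈ K, ∀ q ∈ K, sphSeg p q ⊆ K := hK.2.1.2.2
  have hCconv : Convex ℝ (icone K) := convex_icone hKs hseg
  have hKpos : ∀ y ∈ K, 0 < ⟪h, y⟫ := fun y hy => (hKh hy).2
  have hint : (interior (icone K)).Nonempty := by
    obtain ⟨w, hw⟩ := hK.2.2
    rw [sphInt_eq_inter hKs] at hw
    exact ⟨w, hw.2⟩
  constructor
  · -- illuminated → normals condition
    rintro ⟨hne, hsegE, z, hz1, hzint⟩
    obtain ⟨hzS, hzspan⟩ := hz1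
    intro x hxn hxK hxq
    by_contra hle
    push_neg at hle
    have hxC := inner_nonpos_icone hKs hxK
    have hx0 : x ≠ 0 := by
      intro h0; rw [h0, norm_zero] at hxn; norm_num at hxn
    have hzI : z ∈ interior (icone K) := by
      rw [sphInt_eq_inter hKs] at hzint
      exact hzint.2
    have hneg : ⟪x, z⟫ < 0 := inner_neg_interior_icone hx0 hxC hzI
    obtain ⟨α, β, hαβ⟩ := Submodule.mem_span_pair.mp hzspan
    rw [← hαβ, inner_add_right, real_inner_smul_right, real_inner_smul_right, hxq,
      mul_zero, add_zero] at hneg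
    have hxpp : ⟪x, pp⟫ ≤ 0 := by rw [real_inner_comm]; exact hle
    have hα : 0 < α := by nlinarith
    have hzK : z ∈ K := sphInt_subset' hzint
    have hβ : 0 < β := by
      have hz2 : 0 < ⟪h, z⟫ := hKpos z hzK
      rw [← hαβ, inner_add_right, real_inner_smul_right, real_inner_smul_right, hph,
        mul_zero, zero_add] at hz2
      nlinarith [hKpos q hqK]
    have hc : 0 < α + β := by linarith
    have hzn : ‖z‖ = 1 := mem_uSphere.mp hzS
    have hzseg : z ∈ sphSeg pp q := by
      refine ⟨β/(α+β), ⟨by positivity, by rw [div_le_one hc]; linarith⟩, ?_⟩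
      have e1 : (1:ℝ) - β/(α+β) = α/(α+β) := by field_simp; ring
      have e2 : (α/(α+β)) • pp + (β/(α+β)) • q = (α+β)⁻¹ • z := by
        rw [← hαβ, smul_add, smul_smul, smul_smul]
        rw [div_eq_inv_mul, div_eq_inv_mul]
      show nproj ((1 - β/(α+β)) • pp + (β/(α+β)) • q) = z
      rw [e1, e2, nproj_smul (inv_pos.mpr hc), nproj_eq_self hzn]
    exact eq_empty_iff_forall_notMem.mp hsegE z ⟨hzseg, hzint⟩
  · -- normals condition → illuminated
    intro hstar
    have hq0 : 0 < ⟪h, q⟫ := hKpos q hqK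
    obtain ⟨x0, hx0n, hx0C, hx0q⟩ := exists_normal_icone hKs hCconv hint hqK hq'
    have hx0p : 0 < ⟪pp, x0⟫ :=
      hstar x0 hx0n (fun y hy => hx0C y (mem_icone_of_mem hKs hy)) hx0q
    refine ⟨?_, ?_, ?_⟩
    · intro he
      rw [he, inner_neg_right, hph] at hq0
      norm_num at hq0
    · rw [eq_empty_iff_forall_notMem]
      rintro z ⟨⟨t, ht, rfl⟩, hzint⟩
      set w := (1 - t) • pp + t • q with hw
      have hzS : nproj w ∈ uSphere d := hzint.1
      have hw0 : w ≠ 0 := by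
        intro h0
        rw [mem_uSphere, h0] at hzS
        simp [nproj] at hzS
      have hwint : w ∈ interior (icone K) := by
        have h1 : nproj w ∈ interior (icone K) := by
          rw [sphInt_eq_inter hKs] at hzint
          exact hzint.2
        have h2 := smul_mem_interior_icone (norm_pos_iff.mpr hw0) h1
        rwa [smul_nproj] at h2
      have hx00 : x0 ≠ 0 := by
        intro h0; rw [h0, norm_zero] at hx0n; norm_num at hx0n
      have hlt := inner_neg_interior_icone hx00 hx0C hwint
      rw [hw, inner_add_right, real_inner_smul_right, real_inner_smul_right, hx0q,
        mul_zero, add_zero, real_inner_comm] at hlt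
      have ht1 : t ≤ 1 := ht.2
      nlinarith
    · by_cases hcase : ∃ s : ℝ, 0 < s ∧ q - s • pp ∈ interior (icone K)
      · obtain ⟨s, hs, hmem⟩ := hcase
        set w := q - s • pp with hw
        have hw0 : w ≠ 0 := by
          intro h0
          rw [h0] at hmem
          exact zero_not_mem_interior_icone hKs hKpos hh hmem
        have hwn : 0 < ‖w‖ := norm_pos_iff.mpr hw0
        have hz'int : nproj w ∈ interior (icone K) := by
          have := smul_mem_interior_icone (inv_pos.mpr hwn) hmem
          exact this
        have hz'S : nproj w ∈ uSphere d := mem_uSphere.mpr (nproj_norm hw0)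
        have hwspan : w ∈ Submodule.span ℝ {pp, q} := by
          apply Submodule.mem_span_pair.mpr
          exact ⟨-s, 1, by rw [hw]; module⟩
        have hz'span : nproj w ∈ Submodule.span ℝ {pp, q} := by
          show ‖w‖⁻¹ • w ∈ _
          exact Submodule.smul_mem _ _ hwspan
        refine ⟨nproj w, ⟨hz'S, hz'span⟩, ?_⟩
        rw [sphInt_eq_inter hKs]
        exact ⟨hz'S, hz'int⟩
      · exfalso
        push_neg at hcase
        set R := {w : Euc (d+1) | ∃ s : ℝ, 0 ≤ s ∧ w = q - s • pp} with hR
        have hRconv : Convex ℝ R := by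
          rintro w1 ⟨s1, hs1, rfl⟩ w2 ⟨s2, hs2, rfl⟩ a b ha hb hab
          refine ⟨a*s1 + b*s2, by positivity, ?_⟩
          match_scalars
          · linarith
          · ring
        have hqint : q ∉ interior (icone K) := by
          intro hcon
          exact hq' ((sphInt_eq_inter hKs).symm ▸ (⟨hKs hqK, hcon⟩ :
            q ∈ uSphere d ∩ interior (icone K)))
        have hdis : interior (icone K) ∩ R = ∅ := by
          rw [eq_empty_iff_forall_notMem]
          rintro w ⟨hw1, s, hs, rfl⟩
          rcases hs.eq_or_lt with rfl | hs'
          · rw [zero_smul, sub_zero] at hw1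
            exact hqint hw1
          · exact hcase s hs' hw1
        obtain ⟨x, hxn, hxC, hxq, hxR⟩ := sep_icone hKs hCconv hint hRconv
          (mem_icone_of_mem hKs hqK) ⟨0, le_refl 0, by simp⟩ hdis
        have h1 := hxR (q - (1:ℝ) • pp) ⟨1, zero_le_one, rfl⟩
        rw [inner_sub_right, hxq, one_smul, zero_sub] at h1
        have h2 := hstar x hxn (fun y hy => hxC y (mem_icone_of_mem hKs hy)) hxq
        rw [real_inner_comm] at h2
        linarith

end IllumAux

/-- Let `H` be a great sphere disjoint from the convex body `K ⊆ S^d`, bounding the open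
hemisphere `H_h ⊇ K`. Then `{p_1, …, p_n} ⊆ H` illuminates `K` iff the open hemispheres
`H_{p_i}` — whose boundary great spheres all contain `-h ∈ int K*` — cover every proper
exposed face of `K*`. -/
theorem stmt17 (d : ℕ) (K : Set (Euc (d + 1))) (hK : IsSphBody d K)
    (h : Euc (d + 1)) (hh : h ∈ uSphere d) (hdisj : greatSphere d h ∩ K = ∅)
    (hKh : K ⊆ openHemi d h)
    (n : ℕ) (p : Fin n → Euc (d + 1)) (hp : ∀ i, p i ∈ greatSphere d h) :
    -h ∈ sphInt d (sphPolar d K) ∧ (∀ i, ⟪p i, -h⟫ = 0) ∧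
    (SphIlluminates d K (Set.range p) ↔
      ∀ F, IsSphExposedFace d (sphPolar d K) F → F ≠ sphPolar d K →
        ∃ i, F ⊆ openHemi d (p i)) := by
  have hKs : K ⊆ uSphere d := hK.2.1.1
  have hsegconv : ∀ a ∈ K, ∀ b ∈ K, sphSeg a b ⊆ K := hK.2.1.2.2
  have hCconv : Convex ℝ (icone K) := convex_icone hKs hsegconv
  have hCcl : IsClosed (icone K) := isClosed_icone hKs hK.1.isClosed
  have hKpos : ∀ y ∈ K, 0 < ⟪h, y⟫ := fun y hy => (hKh hy).2
  have hint : (interior (icone K)).Nonempty := by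
    obtain ⟨w, hw⟩ := hK.2.2
    rw [sphInt_eq_inter hKs] at hw
    exact ⟨w, hw.2⟩
  have hKne : K.Nonempty := by
    obtain ⟨w, hw⟩ := hK.2.2
    exact ⟨w, sphInt_subset' hw⟩
  have hhn : ‖h‖ = 1 := mem_uSphere.mp hh
  have hnhS : -h ∈ uSphere d := mem_uSphere.mpr (by rw [norm_neg]; exact hhn)
  -- part 1
  have part1 : -h ∈ sphInt d (sphPolar d K) := by
    obtain ⟨y0, hy0K, hy0min⟩ := hK.1.exists_isMinOn hKne
      ((continuous_const.inner continuous_id).continuousOn :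
        ContinuousOn (fun y => ⟪h, y⟫) K)
    set ε := ⟪h, y0⟫ with hε
    have hε0 : 0 < ε := hKpos y0 hy0K
    refine ⟨hnhS, Metric.ball (-h) ε, Metric.isOpen_ball, Metric.mem_ball_self hε0, ?_⟩
    rintro x ⟨hxb, hxS⟩
    refine ⟨hxS, fun y hy => ?_⟩
    have h1 : ⟪x + h, y⟫ ≤ ‖x + h‖ * ‖y‖ := real_inner_le_norm _ _
    have h2 : ‖x + h‖ < ε := by
      have := Metric.mem_ball.mp hxb
      rwa [dist_eq_norm, sub_neg_eq_add] at this
    have h3 : ‖y‖ = 1 := mem_uSphere.mp (hKs hy)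
    have h4 : ε ≤ ⟪h, y⟫ := hy0min hy
    have h5 : ⟪x + h, y⟫ = ⟪x, y⟫ + ⟪h, y⟫ := inner_add_left _ _ _
    rw [h3, mul_one] at h1
    linarith
  refine ⟨part1, fun i => ?_, ?_, ?_⟩
  · rw [inner_neg_right, real_inner_comm, (hp i).2, neg_zero]
  · -- illuminates → faces covered
    intro hIll F hF hFne
    obtain ⟨⟨x0, hx0F⟩, u, huS, husupp, hFeq⟩ := hF
    rw [hFeq] at hx0F
    have hx0P : x0 ∈ sphPolar d K := hx0F.1
    have hx0u : ⟪u, x0⟫ = 0 := hx0F.2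
    have hx0n : ‖x0‖ = 1 := mem_uSphere.mp hx0P.1
    have hx00 : x0 ≠ 0 := by
      intro h0; rw [h0, norm_zero] at hx0n; norm_num at hx0n
    have huK : u ∈ K := by
      by_contra huKn
      have huC : u ∉ icone K := fun hc => huKn ((icone_inter_sphere hKs huS).mp hc)
      obtain ⟨f, b, hfb, hbu⟩ := geometric_hahn_banach_closed_point hCconv hCcl huC
      have hb0 : 0 < b := by
        have := hfb 0 zero_mem_icone
        simpa using this
      have hfC0 : ∀ z ∈ icone K, f z ≤ 0 := cone_nonpos f (fun z hz => (hfb z hz).le)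
      have hf0 : f ≠ 0 := by
        intro h0
        rw [h0] at hbu
        simp only [ContinuousLinearMap.zero_apply] at hbu
        linarith
      obtain ⟨x, c, hxn, hc, hxf⟩ := exists_unit_repr f hf0
      have hxP : x ∈ sphPolar d K := by
        refine ⟨mem_uSphere.mpr hxn, fun y hy => ?_⟩
        rw [hxf]
        exact mul_nonpos_of_nonneg_of_nonpos hc.le (hfC0 y (mem_icone_of_mem hKs hy))
      have h6 := husupp x hxP
      rw [real_inner_comm, hxf] at h6
      nlinarith
    have hubd : u ∉ sphInt d K := by
      intro huint
      have huI : u ∈ interior (icone K) := by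
        rw [sphInt_eq_inter hKs] at huint
        exact huint.2
      have h7 : ⟪x0, u⟫ < 0 :=
        inner_neg_interior_icone hx00 (inner_nonpos_icone hKs hx0P.2) huI
      rw [real_inner_comm, hx0u] at h7
      exact lt_irrefl 0 h7
    obtain ⟨pt, hpt, hillum⟩ := hIll u ⟨huK, hubd⟩
    obtain ⟨i, rfl⟩ := hpt
    refine ⟨i, ?_⟩
    have hstar := (illum_iff hK hh hKh huK hubd (hp i).1 (hp i).2).mp hillum
    intro y hyF
    rw [hFeq] at hyF
    have := hstar y (mem_uSphere.mp hyF.1.1) hyF.1.2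
      (by rw [real_inner_comm]; exact hyF.2)
    exact ⟨hyF.1.1, this⟩
  · -- faces covered → illuminates
    intro hcov q hq
    obtain ⟨x0, hx0n, hx0C, hx0q⟩ := exists_normal_icone hKs hCconv hint hq.1 hq.2
    set F := {y ∈ sphPolar d K | ⟪q, y⟫ = 0} with hFdef
    have hx0F : x0 ∈ F := by
      refine ⟨⟨mem_uSphere.mpr hx0n, fun y hy => hx0C y (mem_icone_of_mem hKs hy)⟩, ?_⟩
      rw [real_inner_comm]; exact hx0q
    have hF : IsSphExposedFace d (sphPolar d K) F := by
      refine ⟨⟨x0, hx0F⟩, q, hKs hq.1, fun y hy => ?_, rfl⟩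
      rw [real_inner_comm]
      exact hy.2 q hq.1
    have hnhP : -h ∈ sphPolar d K := by
      refine ⟨hnhS, fun y hy => ?_⟩
      rw [inner_neg_left]
      linarith [hKpos y hy]
    have hFne : F ≠ sphPolar d K := by
      intro heq
      have hmem : -h ∈ F := heq.symm ▸ hnhP
      have h8 := hmem.2
      rw [inner_neg_right] at h8
      have h9 := hKpos q hq.1
      rw [real_inner_comm] at h9
      linarith
    obtain ⟨i, hFsub⟩ := hcov F hF hFne
    refine ⟨p i, Set.mem_range_self i, (illum_iff hK hh hKh hq.1 hq.2 (hp i).1 (hp i).2).mpr ?_⟩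
    intro x hxn hxK hxq
    have hxF : x ∈ F := ⟨⟨mem_uSphere.mpr hxn, hxK⟩, by rw [real_inner_comm]; exact hxq⟩
    exact (hFsub hxF).2
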